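/- Suppose that for some uniform ultrafilter U on ω_m, the reduced power |ω_n^{ω_m}/U| = ω_{n+1}, and GCH holds below ℵ_ω. Then the chromatic number of the Erdős–Hajnal graph EH(ω_m, ω_n) equals ω_{n+1}. -/

import Mathlib

open Cardinal

section EHhelpers
open Ordinal
universe v

private lemma lt_aleph_succ_le {k : ℕ} {c : Cardinal.{0}} (h : c < Cardinal.aleph (k+1)) :
    c ≤ Cardinal.aleph k := by
  rw [Ordinal.add_one_eq_succ, Cardinal.aleph_succ, Order.lt_succ_iff] at h
  exact h

private lemma gch_pow {n : ℕ}
    (gch : ∀ k : ℕ, (2 : Cardinal.{0}) ^ Cardinal.aleph k = Cardinal.aleph (k + 1))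
    {c : Cardinal.{0}} (h : c < Cardinal.aleph n) : (2:Cardinal) ^ c ≤ Cardinal.aleph n := by
  rcases lt_or_ge c ℵ₀ with hc | hc
  · refine le_trans (Cardinal.power_lt_aleph0 ?_ hc).le (Cardinal.aleph0_le_aleph _)
    exact_mod_cast Cardinal.nat_lt_aleph0 2
  · obtain ⟨o, rfl⟩ := Cardinal.mem_range_aleph_iff.mpr hc
    have ho : o < (n : Ordinal) := Cardinal.aleph_lt_aleph.mp h
    have ho' : o < Ordinal.omega0 := ho.trans (Ordinal.nat_lt_omega0 n)
    obtain ⟨j, rfl⟩ := Ordinal.lt_omega0.mp ho'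
    have hj : j < n := by exact_mod_cast ho
    rw [gch j]
    apply Cardinal.aleph_le_aleph.mpr
    rw [Ordinal.add_one_eq_succ, Order.succ_le_iff]
    exact_mod_cast hj

private lemma add_one_lt_aleph {n : ℕ} {c : Cardinal.{0}} (h : c < Cardinal.aleph n) :
    c + 1 < Cardinal.aleph n := by
  rcases lt_or_ge c ℵ₀ with hc | hc
  · exact lt_of_lt_of_le (Cardinal.add_lt_aleph0 hc Cardinal.one_lt_aleph0)
      (Cardinal.aleph0_le_aleph _)
  · rwa [Cardinal.add_one_eq hc]

private lemma iter_infinite (β : Type) (hβ : ℵ₀ ≤ #β) : ∀ j : ℕ, ℵ₀ ≤ #(Set^[j] β) := by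
  intro j
  induction j with
  | zero => exact hβ
  | succ j ih =>
    rw [Function.iterate_succ_apply', Cardinal.mk_set]
    exact le_trans ih (Cardinal.cantor _).le

private lemma iter_mk {n : ℕ}
    (gch : ∀ k : ℕ, (2 : Cardinal.{0}) ^ Cardinal.aleph k = Cardinal.aleph (k + 1))
    (β : Type) (hβ : #β = Cardinal.aleph n) :
    ∀ j : ℕ, #(Set^[j] β) = Cardinal.aleph ((n + j : ℕ)) := by
  intro j
  induction j with
  | zero => simpa using hβ
  | succ j ih =>
    rw [Function.iterate_succ_apply', Cardinal.mk_set, ih, gch (n+j)]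
    norm_cast

private lemma iter_le {n : ℕ}
    (gch : ∀ k : ℕ, (2 : Cardinal.{0}) ^ Cardinal.aleph k = Cardinal.aleph (k + 1))
    (γ : Type) (hγ : #γ ≤ Cardinal.aleph n) :
    ∀ j : ℕ, #(Set^[j] γ) ≤ Cardinal.aleph ((n + j : ℕ)) := by
  intro j
  induction j with
  | zero => simpa using hγ
  | succ j ih =>
    rw [Function.iterate_succ_apply', Cardinal.mk_set]
    calc (2:Cardinal) ^ #(Set^[j] γ) ≤ 2 ^ Cardinal.aleph ((n+j:ℕ)) :=
          Cardinal.power_le_power_left (by norm_num) ih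
      _ = Cardinal.aleph ((n+j :ℕ) + 1) := gch (n+j)
      _ = Cardinal.aleph ((n + (j+1) : ℕ)) := by norm_cast

private lemma fin_init_cons {ι : Type} {L : ℕ} (b : ι) (u : Fin (L+1) → ι) :
    Fin.init (Fin.cons b u : Fin (L+2) → ι) = Fin.cons b (Fin.init u) := by
  funext i
  induction i using Fin.cases with
  | zero => simp [Fin.init]
  | succ i => simp [Fin.init, ← Fin.succ_castSucc]



private def IncT {ι : Type} (r : ι → ι → Prop) {L : ℕ} (s : Fin L → ι) : Prop :=
  ∀ i j : Fin L, i < j → r (s i) (s j)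

private lemma shift_descent {ι : Type} (r : ι → ι → Prop) (wo : IsWellOrder ι r) :
    ∀ (j : ℕ) (γ : Type) (h : {s : Fin (j+1) → ι // IncT r s} → γ),
      (∀ (u : Fin (j+2) → ι) (hu : IncT r u)
        (h1 : IncT r (Fin.init u)) (h2 : IncT r (Fin.tail u)),
         h ⟨Fin.init u, h1⟩ ≠ h ⟨Fin.tail u, h2⟩) →
      #ι ≤ #(Set^[j] γ) := by
  haveI := wo
  intro j
  induction j with
  | zero =>
    intro γ h hp
    rw [Function.iterate_zero_apply]
    have hconst : ∀ a : ι, IncT r (fun _ : Fin 1 => a) := by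
      intro a i j hij
      simp [Fin.lt_def] at hij
    apply Cardinal.mk_le_of_injective (f := fun a : ι => h ⟨fun _ => a, hconst a⟩)
    intro a b hab
    by_contra hne
    have key : ∀ x y : ι, r x y → h ⟨fun _ => x, hconst x⟩ ≠ h ⟨fun _ => y, hconst y⟩ := by
      intro x y hxy
      have hu : IncT r (Fin.cons x (fun _ : Fin 1 => y) : Fin 2 → ι) := by
        intro i j hij
        match i, j with
        | ⟨0, _⟩, ⟨0, _⟩ => simp [Fin.lt_def] at hij
        | ⟨0, _⟩, ⟨1, _⟩ => exact hxy
        | ⟨1, _⟩, ⟨0, _⟩ => simp [Fin.lt_def] at hij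
        | ⟨1, _⟩, ⟨1, _⟩ => simp [Fin.lt_def] at hij
      have e1 : Fin.init (Fin.cons x (fun _ : Fin 1 => y) : Fin 2 → ι) = fun _ => x := by
        funext i
        have : i = 0 := Subsingleton.elim _ _
        subst this
        simp [Fin.init]
      have e2 : Fin.tail (Fin.cons x (fun _ : Fin 1 => y) : Fin 2 → ι) = fun _ => y := by
        funext i
        simp [Fin.tail]
      have := hp _ hu (e1 ▸ hconst x) (e2 ▸ hconst y)
      have eq1 : (⟨Fin.init (Fin.cons x (fun _ : Fin 1 => y) : Fin 2 → ι), e1 ▸ hconst x⟩ :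
          {s : Fin 1 → ι // IncT r s}) = ⟨fun _ => x, hconst x⟩ := Subtype.ext e1
      have eq2 : (⟨Fin.tail (Fin.cons x (fun _ : Fin 1 => y) : Fin 2 → ι), e2 ▸ hconst y⟩ :
          {s : Fin 1 → ι // IncT r s}) = ⟨fun _ => y, hconst y⟩ := Subtype.ext e2
      rw [eq1, eq2] at this
      exact this
    rcases trichotomous_of r a b with hr | he | hr
    · exact key a b hr hab
    · exact hne he
    · exact key b a hr hab.symm
  | succ j IH =>
    intro γ h hp
    rw [Function.iterate_succ_apply]
    set H : {s : Fin (j+1) → ι // IncT r s} → Set γ := fun s =>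
      {x | ∃ b, ∃ hin : IncT r (Fin.cons b s.1 : Fin (j+2) → ι), x = h ⟨Fin.cons b s.1, hin⟩}
      with hHdef
    apply IH (Set γ) H
    intro u hu h1 h2 heq
    -- δ := h ⟨u, hu⟩ is in H ⟨tail u⟩
    have hmem : h ⟨u, hu⟩ ∈ H ⟨Fin.tail u, h2⟩ := by
      have hctu : (Fin.cons (u 0) (Fin.tail u) : Fin (j+2) → ι) = u := Fin.cons_self_tail u
      refine ⟨u 0, by rw [hctu]; exact hu, ?_⟩
      congr 1
      exact (Subtype.ext hctu).symm
    rw [← heq] at hmem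
    obtain ⟨b, hin, hδ⟩ := hmem
    -- b is r-below u 0
    have hb0 : r b (u 0) := by
      have := hin 0 1 (by simp [Fin.lt_def])
      simpa [Fin.init] using this
    -- build v = cons b u
    have hv : IncT r (Fin.cons b u : Fin (j+3) → ι) := by
      intro i k hik
      induction k using Fin.cases with
      | zero => exact absurd hik (Fin.not_lt_zero _)
      | succ k =>
        induction i using Fin.cases with
        | zero =>
          rw [Fin.cons_zero, Fin.cons_succ]
          rcases eq_or_ne k 0 with rfl | hk
          · exact hb0
          · refine _root_.trans hb0 (hu 0 k ?_)
            exact Fin.pos_iff_ne_zero.mpr hk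
        | succ i =>
          rw [Fin.cons_succ, Fin.cons_succ]
          exact hu i k (by rwa [Fin.succ_lt_succ_iff] at hik)
    have hvinit : Fin.init (Fin.cons b u : Fin (j+3) → ι) = Fin.cons b (Fin.init u) :=
      fin_init_cons b u
    have hvtail : Fin.tail (Fin.cons b u : Fin (j+3) → ι) = u := rfl
    have hIncInit : IncT r (Fin.init (Fin.cons b u : Fin (j+3) → ι)) := by
      rw [hvinit]; exact hin
    have hIncTail : IncT r (Fin.tail (Fin.cons b u : Fin (j+3) → ι)) := by
      rw [hvtail]; exact hu
    have := hp _ hv hIncInit hIncTail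
    apply this
    have eq1 : (⟨Fin.init (Fin.cons b u : Fin (j+3) → ι), hIncInit⟩ :
        {s : Fin (j+2) → ι // IncT r s}) = ⟨Fin.cons b (Fin.init u), hin⟩ := Subtype.ext hvinit
    have eq2 : (⟨Fin.tail (Fin.cons b u : Fin (j+3) → ι), hIncTail⟩ :
        {s : Fin (j+2) → ι // IncT r s}) = ⟨u, hu⟩ := Subtype.ext hvtail
    rw [eq1, eq2, ← hδ]



private lemma shift_coloring (β : Type) (hβ : ℵ₀ ≤ #β) :
    ∀ (k : ℕ) (M : Type) (A : M → Set^[k] β), Function.Injective A →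
      ∃ H : (Fin (k+1) → M) → β × List Bool,
        ∀ v : Fin (k+2) → M, Fin.init v ≠ Fin.tail v → H (Fin.init v) ≠ H (Fin.tail v) := by
  intro k
  induction k with
  | zero =>
    intro M A hA
    refine ⟨fun s => (A (s 0), []), ?_⟩
    intro v hne he
    apply hne
    simp only [Prod.mk.injEq] at he
    have h01 : v 0 = v 1 := by
      have := hA (congrArg Prod.fst he)
      simpa [Fin.init, Fin.tail, Fin.succ_zero_eq_one] using this
    funext i
    have hi : i = 0 := Fin.fin_one_eq_zero i
    subst hi
    show v (Fin.castSucc 0) = v ((0 : Fin 1).succ)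
    simpa [Fin.succ_zero_eq_one] using h01
  | succ k IH =>
    intro M A hA
    classical
    have E : (Set^[k+1] β) = Set (Set^[k] β) := Function.iterate_succ_apply' Set k β
    set N := Set^[k] β with hN
    set SA : M → Set N := fun a => (Equiv.cast E) (A a) with hSAdef
    have hSA : Function.Injective SA := fun a b hab => hA ((Equiv.cast E).injective hab)
    have hNinf : ℵ₀ ≤ #N := iter_infinite β hβ k
    have hON : #(Option N) ≤ #N := by
      rw [Cardinal.mk_option, Cardinal.add_one_eq hNinf]
    obtain ⟨OB⟩ := (Cardinal.le_def _ _).mp hON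
    obtain ⟨H0, hH0⟩ := IH (Option N) (fun x => OB x) OB.injective
    have exwit : ∀ a b : M, a ≠ b → ∃ x : N, x ∈ SA a ↔ x ∉ SA b := by
      intro a b hab
      have hne : SA a ≠ SA b := fun e => hab (hSA e)
      by_contra hno
      push_neg at hno
      apply hne
      ext x
      have := hno x
      tauto
    set dM : M → M → Option N := fun a b =>
      if hab : a = b then none else some (Classical.choose (exwit a b hab)) with hdM
    have dM_none : ∀ a b, dM a b = none ↔ a = b := by
      intro a b
      by_cases hab : a = b <;> simp [hdM, hab]
    have dM_some : ∀ a b x, dM a b = some x → (x ∈ SA a ↔ x ∉ SA b) := by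
      intro a b x hx
      by_cases hab : a = b
      · simp [hdM, hab] at hx
      · simp [hdM, hab] at hx
        rw [← hx]
        exact Classical.choose_spec (exwit a b hab)
    set Wof : (Fin (k+2) → M) → (Fin (k+1) → Option N) :=
      fun s i => dM (s i.castSucc) (s i.succ) with hWof
    set bitOf : (Fin (k+2) → M) → Bool := fun s =>
      decide (∃ y, Wof s 0 = some y ∧ y ∈ SA (s 0)) with hbitOf
    refine ⟨fun s => ((H0 (Wof s)).1, bitOf s :: (H0 (Wof s)).2), ?_⟩
    intro v hne he
    set W' : Fin (k+2) → Option N := fun i => dM (v i.castSucc) (v i.succ) with hW'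
    have c1 : Wof (Fin.init v) = Fin.init W' := by
      funext i
      show dM (v i.castSucc.castSucc) (v i.succ.castSucc) = dM (v i.castSucc.castSucc) (v i.castSucc.succ)
      rw [Fin.succ_castSucc]
    have c2 : Wof (Fin.tail v) = Fin.tail W' := by
      funext i
      show dM (v i.castSucc.succ) (v i.succ.succ) = dM (v i.succ.castSucc) (v i.succ.succ)
      rw [Fin.succ_castSucc]
    simp only [Prod.mk.injEq, List.cons.injEq] at he
    obtain ⟨hfst, hbit, htl⟩ := he
    by_cases hWc : Fin.init W' = Fin.tail W'
    · have hcst : ∀ i, W' i = W' 0 := by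
        intro i
        induction i using Fin.induction with
        | zero => rfl
        | succ i ih =>
          have hstep : W' i.castSucc = W' i.succ := congrFun hWc i
          rw [← hstep]
          exact ih
      cases h0 : W' 0 with
      | none =>
        apply hne
        funext i
        have hwi : W' i = none := (hcst i).trans h0
        show v i.castSucc = v i.succ
        exact (dM_none _ _).mp hwi
      | some x =>
        have spec0 : x ∈ SA (v 0) ↔ x ∉ SA (v 1) := by
          have hwi0 : dM (v (Fin.castSucc 0)) (v (Fin.succ 0)) = some x := h0
          have := dM_some _ _ _ hwi0
          simpa [Fin.succ_zero_eq_one] using this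
        have s0 : Wof (Fin.init v) 0 = some x := by
          rw [c1]
          show W' (Fin.castSucc 0) = some x
          rw [Fin.castSucc_zero, h0]
        have s1 : Wof (Fin.tail v) 0 = some x := by
          rw [c2]
          show W' ((0 : Fin (k+1)).succ) = some x
          exact (hcst _).trans h0
        have e1 : (∃ y, Wof (Fin.init v) 0 = some y ∧ y ∈ SA ((Fin.init v) 0)) ↔ x ∈ SA (v 0) := by
          constructor
          · rintro ⟨y, hy1, hy2⟩
            rw [s0, Option.some.injEq] at hy1
            subst hy1
            simpa [Fin.init] using hy2
          · intro hx
            exact ⟨x, s0, by simpa [Fin.init] using hx⟩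
        have e2 : (∃ y, Wof (Fin.tail v) 0 = some y ∧ y ∈ SA ((Fin.tail v) 0)) ↔ x ∈ SA (v 1) := by
          constructor
          · rintro ⟨y, hy1, hy2⟩
            rw [s1, Option.some.injEq] at hy1
            subst hy1
            simpa [Fin.tail, Fin.succ_zero_eq_one] using hy2
          · intro hx
            exact ⟨x, s1, by simpa [Fin.tail, Fin.succ_zero_eq_one] using hx⟩
        have hiff := decide_eq_decide.mp hbit
        rw [e1, e2] at hiff
        tauto
    · refine hH0 W' hWc ?_
      rw [← c1, ← c2]
      exact Prod.ext hfst htl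

private lemma gch_down
    (gch : ∀ k : ℕ, (2 : Cardinal.{v}) ^ Cardinal.aleph k = Cardinal.aleph (k + 1)) :
    ∀ k : ℕ, (2 : Cardinal.{0}) ^ Cardinal.aleph k = Cardinal.aleph (k + 1) := by
  intro k
  apply Cardinal.lift_injective.{v, 0}
  rw [Cardinal.lift_power, Cardinal.lift_aleph, Cardinal.lift_aleph, Cardinal.lift_ofNat]
  rw [Ordinal.lift_natCast, Ordinal.lift_add, Ordinal.lift_natCast, Ordinal.lift_one]
  exact gch k

end EHhelpers

/-- The chromatic number of a graph `(V, Adj)` as a cardinal: the least cardinality of a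
type admitting a proper vertex coloring. -/
noncomputable def ChrNum (V : Type) (Adj : V → V → Prop) : Cardinal :=
  sInf {c : Cardinal | ∃ (γ : Type) (f : V → γ), #γ = c ∧ ∀ x y, Adj x y → f x ≠ f y}

/-- If some uniform ultrafilter `U` on `ω_m` has reduced power `|ω_n^{ω_m}/U| = ω_{n+1}`,
and GCH holds below `ℵ_ω`, then the chromatic number of the Erdős–Hajnal graph
`EH(ω_m, ω_n)` (vertices: functions `ω_m → ω_n`; edges: almost-everywhere disagreement)
equals `ω_{n+1}`. -/
theorem stmt17 (n m : ℕ)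
    (gch : ∀ k : ℕ, (2 : Cardinal) ^ Cardinal.aleph k = Cardinal.aleph (k + 1))
    (ι β : Type) (hι : #ι = Cardinal.aleph m) (hβ : #β = Cardinal.aleph n)
    (U : Ultrafilter ι) (huniform : ∀ s ∈ U, #↥s = Cardinal.aleph m)
    (hsize : #(Filter.Germ (U : Filter ι) β) = Cardinal.aleph (n + 1)) :
    ChrNum (ι → β) (fun f g => #↥{α : ι | f α = g α} < Cardinal.aleph m) =
      Cardinal.aleph (n + 1) := by
  classical
  have gch0 := gch_down gch
  have hβinf : ℵ₀ ≤ #β := by rw [hβ]; exact Cardinal.aleph0_le_aleph _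
  haveI hBne : Nonempty β := Cardinal.mk_ne_zero_iff.mp
    (by rw [hβ]; exact (Cardinal.aleph_pos _).ne')
  -- the number of germs is at most the number of functions
  have hGle : #(Filter.Germ (U : Filter ι) β) ≤ #(ι → β) := by
    apply Cardinal.mk_le_of_surjective
      (f := fun f : ι → β => (↑f : Filter.Germ (U : Filter ι) β))
    intro x
    induction x using Filter.Germ.inductionOn with
    | _ f => exact ⟨f, rfl⟩
  -- n ≤ m
  have hnm : n ≤ m := by
    by_contra hcon
    push_neg at hcon
    obtain ⟨n₀, rfl⟩ : ∃ n₀, n = n₀ + 1 := ⟨n - 1, by omega⟩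
    have harr : #(ι → β) = Cardinal.aleph (n₀ + 1) := by
      rw [← Cardinal.power_def β ι, hβ, hι]
      have hcast : ((n₀ + 1 : ℕ) : Ordinal) = (n₀ : Ordinal) + 1 := by exact_mod_cast rfl
      have hle : Cardinal.aleph m ≤ Cardinal.aleph n₀ :=
        Cardinal.aleph_le_aleph.mpr (by exact_mod_cast (by omega : m ≤ n₀))
      rw [hcast, ← gch0 n₀, ← Cardinal.power_mul,
        Cardinal.mul_eq_max (Cardinal.aleph0_le_aleph _) (Cardinal.aleph0_le_aleph _),
        sup_eq_left.mpr hle]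
    have hbad : Cardinal.aleph (((n₀+1:ℕ) : Ordinal) + 1) ≤ Cardinal.aleph (n₀+1) := by
      calc Cardinal.aleph (((n₀+1:ℕ) : Ordinal) + 1)
          = #(Filter.Germ (U : Filter ι) β) := hsize.symm
        _ ≤ #(ι → β) := hGle
        _ = Cardinal.aleph (n₀+1) := harr
    have := Cardinal.aleph_le_aleph.mp hbad
    rw [Ordinal.add_one_eq_succ, Order.succ_le_iff] at this
    exact absurd this (lt_irrefl _)
  -- upper bound: the germ coloring
  have hmem : Cardinal.aleph (n+1) ∈ {c : Cardinal | ∃ (γ : Type) (f : (ι → β) → γ),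
      #γ = c ∧ ∀ x y, (#↥{α : ι | x α = y α} < Cardinal.aleph m) → f x ≠ f y} := by
    refine ⟨Filter.Germ (U : Filter ι) β,
      fun f => (↑f : Filter.Germ (U : Filter ι) β), hsize, ?_⟩
    intro x y hadj hfe
    have hmemU : {α : ι | x α = y α} ∈ U := Filter.Germ.coe_eq.mp hfe
    rw [huniform _ hmemU] at hadj
    exact lt_irrefl _ hadj
  -- lower bound
  have hlb : ∀ cc ∈ {c : Cardinal | ∃ (γ : Type) (f : (ι → β) → γ),
      #γ = c ∧ ∀ x y, (#↥{α : ι | x α = y α} < Cardinal.aleph m) → f x ≠ f y},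
      Cardinal.aleph (n+1) ≤ cc := by
    rintro cc ⟨γ, cf, rfl, hprop⟩
    by_contra hno
    push_neg at hno
    have hγle : #γ ≤ Cardinal.aleph n := lt_aleph_succ_le hno
    obtain ⟨r, wo, hr⟩ := Cardinal.ord_eq ι
    haveI := wo
    have hinit : ∀ z : ι, #{y // r y z} < Cardinal.aleph m := by
      intro z
      rw [← Ordinal.card_typein (r := r) z]
      apply Cardinal.lt_ord.mp
      rw [← hι, hr]
      exact Ordinal.typein_lt_type r z
    rcases Nat.lt_or_ge n m with hlt | hge
    · -- case n < m : shift graph machinery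
      obtain ⟨K, rfl⟩ := Nat.exists_eq_add_of_lt hlt
      set M := Set^[K] β with hMdef
      have hMcard : #M = Cardinal.aleph ((n + K : ℕ)) := iter_mk gch0 β hβ K
      have hsub : ∀ z : ι, #{y // r y z} ≤ #M := by
        intro z
        rw [hMcard]
        have hz := hinit z
        rw [show ((n+K+1 : ℕ) : Ordinal) = ((n+K : ℕ) : Ordinal) + 1 from by
          exact_mod_cast rfl] at hz
        exact lt_aleph_succ_le hz
      have e : ∀ z : ι, {y // r y z} ↪ M :=
        fun z => Classical.choice ((Cardinal.le_def _ _).mp (hsub z))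
      obtain ⟨H, hH⟩ := shift_coloring β hβinf K M id Function.injective_id
      have hPle : #(β × List Bool) ≤ #β := by
        rw [Cardinal.mk_prod, Cardinal.lift_id, Cardinal.lift_id]
        calc #β * #(List Bool) ≤ #β * ℵ₀ := mul_le_mul_right Cardinal.mk_le_aleph0 _
          _ = #β := by
              rw [Cardinal.mul_eq_max hβinf le_rfl, sup_eq_left]
              exact hβinf
      have embP : (β × List Bool) ↪ β := Classical.choice ((Cardinal.le_def _ _).mp hPle)
      set Φ : (Fin (K+1) → ι) → ι → β := fun s z =>
        if h : ∀ i, r (s i) z then embP (H (fun i => e z ⟨s i, h i⟩))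
        else Classical.arbitrary β with hΦ
      have hdprop : ∀ (u : Fin (K+2) → ι), IncT r u →
          ∀ (h1 : IncT r (Fin.init u)) (h2 : IncT r (Fin.tail u)),
          (fun s : {s : Fin (K+1) → ι // IncT r s} => cf (Φ s.1)) ⟨Fin.init u, h1⟩ ≠
          (fun s : {s : Fin (K+1) → ι // IncT r s} => cf (Φ s.1)) ⟨Fin.tail u, h2⟩ := by
        intro u hu h1 h2
        show cf (Φ (Fin.init u)) ≠ cf (Φ (Fin.tail u))
        apply hprop
        have hsubadj : {z : ι | Φ (Fin.init u) z = Φ (Fin.tail u) z} ⊆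
            insert (u (Fin.last (K+1))) {z | r z (u (Fin.last (K+1)))} := by
          intro z hz
          by_contra hm2
          simp only [Set.mem_insert_iff, Set.mem_setOf_eq, not_or] at hm2
          obtain ⟨hz1, hz2⟩ := hm2
          have hlastz : r (u (Fin.last (K+1))) z := by
            rcases trichotomous_of r (u (Fin.last (K+1))) z with h | h | h
            · exact h
            · exact absurd h.symm hz1
            · exact absurd h hz2
          have hall : ∀ i : Fin (K+2), r (u i) z := by
            intro i
            rcases lt_or_eq_of_le (Fin.le_last i) with hi | hi
            · exact _root_.trans (hu i (Fin.last (K+1)) hi) hlastz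
            · rw [hi]; exact hlastz
          have hc1 : ∀ i : Fin (K+1), r ((Fin.init u) i) z := fun i => hall i.castSucc
          have hc2 : ∀ i : Fin (K+1), r ((Fin.tail u) i) z := fun i => hall i.succ
          have hΦ1 : Φ (Fin.init u) z = embP (H (fun i => e z ⟨(Fin.init u) i, hc1 i⟩)) :=
            dif_pos hc1
          have hΦ2 : Φ (Fin.tail u) z = embP (H (fun i => e z ⟨(Fin.tail u) i, hc2 i⟩)) :=
            dif_pos hc2
          set V : Fin (K+2) → M := fun i => e z ⟨u i, hall i⟩ with hV
          have hVi : (fun i => e z ⟨(Fin.init u) i, hc1 i⟩) = Fin.init V := rfl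
          have hVt : (fun i => e z ⟨(Fin.tail u) i, hc2 i⟩) = Fin.tail V := rfl
          have hneV : Fin.init V ≠ Fin.tail V := by
            intro hVe
            have h01 : V (Fin.castSucc 0) = V ((0 : Fin (K+1)).succ) := congrFun hVe 0
            have hsub01 := (e z).injective h01
            have hu01 : u (Fin.castSucc 0) = u ((0 : Fin (K+1)).succ) :=
              congrArg Subtype.val hsub01
            rw [Fin.castSucc_zero] at hu01
            have hr01 : r (u 0) (u ((0 : Fin (K+1)).succ)) := by
              apply hu
              rw [Fin.lt_def]
              simp
            rw [hu01] at hr01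
            exact irrefl _ hr01
          have hHne := hH V hneV
          rw [Set.mem_setOf_eq, hΦ1, hΦ2] at hz
          have hzz := embP.injective hz
          rw [hVi, hVt] at hzz
          exact hHne hzz
        calc #↥{z : ι | Φ (Fin.init u) z = Φ (Fin.tail u) z}
            ≤ #↥(insert (u (Fin.last (K+1))) {z | r z (u (Fin.last (K+1)))}) :=
              Cardinal.mk_le_mk_of_subset hsubadj
          _ ≤ #↥{z | r z (u (Fin.last (K+1)))} + 1 := Cardinal.mk_insert_le
          _ < Cardinal.aleph ((n+K+1 : ℕ)) := add_one_lt_aleph (hinit _)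
      have hdesc := shift_descent r wo K γ (fun s => cf (Φ s.1)) hdprop
      have hfin : #ι ≤ Cardinal.aleph ((n+K : ℕ)) := le_trans hdesc (iter_le gch0 γ hγle K)
      rw [hι] at hfin
      have := Cardinal.aleph_le_aleph.mp hfin
      have hnat : (n+K+1 : ℕ) ≤ (n+K : ℕ) := by exact_mod_cast this
      omega
    · -- case m = n : binary tree clique
      have hmn : m = n := le_antisymm hge hnm
      subst hmn
      have hCTle : #(Σ z : ι, ({y // r y z} → Bool)) ≤ #β := by
        rw [hβ, Cardinal.mk_sigma]
        have hb : ∀ z : ι, #({y // r y z} → Bool) ≤ Cardinal.aleph m := by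
          intro z
          rw [← Cardinal.power_def Bool _, Cardinal.mk_bool]
          exact gch_pow gch0 (hinit z)
        calc Cardinal.sum (fun z : ι => #({y // r y z} → Bool))
            ≤ Cardinal.sum (fun _ : ι => Cardinal.aleph m) := Cardinal.sum_le_sum _ _ hb
          _ = #ι * Cardinal.aleph m := Cardinal.sum_const' _ _
          _ = Cardinal.aleph m := by
              rw [hι, Cardinal.mul_eq_max (Cardinal.aleph0_le_aleph _)
                (Cardinal.aleph0_le_aleph _), sup_idem]
      have embC : (Σ z : ι, ({y // r y z} → Bool)) ↪ β :=
        Classical.choice ((Cardinal.le_def _ _).mp hCTle)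
      set F : (ι → Bool) → ι → β := fun x z => embC ⟨z, fun w => x w.1⟩ with hF
      have hinj : Function.Injective (fun x => cf (F x)) := by
        intro x y hxy
        by_contra hne
        obtain ⟨z₀, hz₀⟩ := Function.ne_iff.mp hne
        have hsubA : {z : ι | F x z = F y z} ⊆ insert z₀ {z | r z z₀} := by
          intro z hz
          by_contra hm2
          simp only [Set.mem_insert_iff, Set.mem_setOf_eq, not_or] at hm2
          obtain ⟨hz1, hz2⟩ := hm2
          have hrz : r z₀ z := by
            rcases trichotomous_of r z₀ z with h | h | h
            · exact h
            · exact absurd h.symm hz1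
            · exact absurd h hz2
          rw [Set.mem_setOf_eq] at hz
          have hsig := embC.injective hz
          have hsnd : ∀ w : {y // r y z}, x w.1 = y w.1 := by
            have h2 := (Sigma.mk.inj_iff.mp hsig).2
            intro w
            exact congrFun (eq_of_heq h2) w
          exact hz₀ (hsnd ⟨z₀, hrz⟩)
        have hadj : #↥{z : ι | F x z = F y z} < Cardinal.aleph m := by
          calc #↥{z : ι | F x z = F y z} ≤ #↥(insert z₀ {z | r z z₀}) :=
                Cardinal.mk_le_mk_of_subset hsubA
            _ ≤ #↥{z | r z z₀} + 1 := Cardinal.mk_insert_le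
            _ < Cardinal.aleph m := add_one_lt_aleph (hinit _)
        exact absurd hxy (hprop _ _ hadj)
      have h2 : (2:Cardinal) ^ Cardinal.aleph m ≤ Cardinal.aleph m := by
        calc (2:Cardinal) ^ Cardinal.aleph m = #(ι → Bool) := by
              rw [← Cardinal.power_def Bool ι, Cardinal.mk_bool, hι]
          _ ≤ #γ := Cardinal.mk_le_of_injective hinj
          _ ≤ Cardinal.aleph m := hγle
      exact absurd h2 (not_le.mpr (Cardinal.cantor _))
  -- combine
  apply le_antisymm
  · exact csInf_le' hmem
  · exact le_csInf ⟨_, hmem⟩ hlb
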